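/- For any information flow diagram I with KTS K and requirement P (path existence): K ⊢ P if and only if I ⊨ P, i.e., K does not satisfy ¬enc(P) on all finite paths iff some path of I has kind P. -/

import Mathlib

set_option autoImplicit true

section IFCIL

variable {N O S A Pr : Type}

/-- Node patterns: a concrete node or the wildcard `*`. -/
inductive NodePat (N : Type) where
  | star : NodePat N
  | node : N → NodePat N

/-- An arc of an information flow diagram: source, nonempty set of operations, target. -/
abbrev Arc (N O : Type) := N × Set O × N

/-- An information flow diagram `I = (N, ta, E)`. -/
structure IFD (N O : Type) where
  ta : N → Set N
  E : Set (Arc N O)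

/-- A node pattern `m` matches a node `n`: `m = *` or `n ∈ ta(m)`. -/
def NodePat.mat (I : IFD N O) : NodePat N → N → Prop
  | .star, _ => True
  | .node m, n => n ∈ I.ta m

/-- Consecutive arcs have matching endpoints. -/
def Chained : List (Arc N O) → Prop
  | [] => True
  | [_] => True
  | a :: b :: rest => a.2.2 = b.1 ∧ Chained (b :: rest)

/-- A path in `I`: nonempty, chained sequence of arcs of `I`. -/
def PathIn (I : IFD N O) (π : List (Arc N O)) : Prop :=
  π ≠ [] ∧ Chained π ∧ ∀ a ∈ π, a ∈ I.E

/-- Arrows: single step `>` or multi step `+>`. -/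
inductive Arrow where
  | single : Arrow
  | multi : Arrow

/-- Path kinds `P ::= n [o]> n' | n +[o]> n' | P₁ P₂`. -/
inductive Kind (N O : Type) where
  | atom : NodePat N → Arrow → Set O → NodePat N → Kind N O
  | comp : Kind N O → Kind N O → Kind N O

/-- The kind satisfaction relation `π ▷_I P`. -/
inductive KSat (I : IFD N O) : List (Arc N O) → Kind N O → Prop where
  | step : NodePat.mat I m n → NodePat.mat I m' n' → (o ∩ o').Nonempty →
      KSat I [(n, o, n')] (.atom m .single o' m')
  | plusBase : KSat I [(n, o, n')] (.atom m .single o' m') →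
      KSat I [(n, o, n')] (.atom m .multi o' m')
  | plusStep : KSat I [(n, o, n')] (.atom m .single o' .star) →
      KSat I π (.atom .star .multi o' m') →
      KSat I ((n, o, n') :: π) (.atom m .multi o' m')
  | comp : KSat I π₁ P₁ → KSat I π₂ P₂ → KSat I (π₁ ++ π₂) (.comp P₁ P₂)

/-- Node refinement: `n ⪯_n n` and `n ⪯_n *`. -/
def NRef : NodePat N → NodePat N → Prop := fun a b => a = b ∨ b = .star

/-- Arrow refinement: reflexivity and `> ⪯_a +>`. -/
inductive ARef : Arrow → Arrow → Prop where
  | refl (a) : ARef a a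
  | up : ARef .single .multi

/-- Kind refinement `⪯_P`: rules (comp), (P-1)–(P-4), closed under reflexivity
and transitivity. -/
inductive KRef : Kind N O → Kind N O → Prop where
  | refl (P) : KRef P P
  | trans : KRef P Q → KRef Q R → KRef P R
  | comp : KRef P₁ P₁' → KRef P₂ P₂' → KRef (.comp P₁ P₂) (.comp P₁' P₂')
  | atom : NRef n₁ n₁' → NRef n₂ n₂' → ARef w w' → o ⊆ o' →
      KRef (.atom n₁ w o n₂) (.atom n₁' w' o' n₂')
  | p2 : NRef n₁ n₁' → NRef n₂ n₂' → o₁ ⊆ o₁' → o₁ ⊆ o₂' → o₂ ⊆ o₂' →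
      KRef (.comp (.atom n₁ .multi o₁ .star) (.atom .star .single o₂ n₂))
           (.comp (.atom n₁' .single o₁' .star) (.atom .star .multi o₂' n₂'))
  | p3 : NRef n₁ n₁' → NRef n₂ n₂' → o₁ ⊆ o' → o₂ ⊆ o' →
      KRef (.comp (.atom n₁ .multi o₁ .star) (.atom .star .multi o₂ n₂))
           (.atom n₁' .multi o' n₂')
  | p4 : NRef n₁ n₁' → NRef n₂ n₂' → o₁ ⊆ o₁' → o₂ ⊆ o₂' → o₂ ⊆ o₁' →
      KRef (.comp (.atom n₁ .single o₁ .star) (.atom .star .multi o₂ n₂))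
           (.comp (.atom n₁' .multi o₁' .star) (.atom .star .single o₂' n₂'))

/-- IFL requirements `R ::= P | ~P | P : P'`. -/
inductive Req (N O : Type) where
  | ex : Kind N O → Req N O
  | no : Kind N O → Req N O
  | constr : Kind N O → Kind N O → Req N O

/-- Validity `I ⊨ R`. -/
def Valid (I : IFD N O) : Req N O → Prop
  | .ex P => ∃ π, PathIn I π ∧ KSat I π P
  | .no P => ¬ ∃ π, PathIn I π ∧ KSat I π P
  | .constr P P' => ∀ π, PathIn I π → KSat I π P → KSat I π P'

/-- Requirement refinement `⪯`: rules (R-1)–(R-3), closed under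
reflexivity and transitivity. -/
inductive RRef : Req N O → Req N O → Prop where
  | refl (R) : RRef R R
  | trans : RRef R₁ R₂ → RRef R₂ R₃ → RRef R₁ R₃
  | ex : KRef P P' → RRef (.ex P) (.ex P')
  | no : KRef P P' → RRef (.no P') (.no P)
  | constr : KRef P₁ P₁' → KRef P₂ P₂' → RRef (.constr P₁' P₂) (.constr P₁ P₂')

/-- The equivalent, right-linear grammar of kinds:
`P ::= n [o]> n' | n +[o]> n' | (n [o]> n') P | (n +[o]> n') P`. -/
inductive LKind (N O : Type) where
  | step : NodePat N → Set O → NodePat N → LKind N O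
  | plus : NodePat N → Set O → NodePat N → LKind N O
  | stepC : NodePat N → Set O → NodePat N → LKind N O → LKind N O
  | plusC : NodePat N → Set O → NodePat N → LKind N O → LKind N O

/-- Kind satisfaction `π ▷_I P` for the right-linear grammar. -/
inductive LSat (I : IFD N O) : List (Arc N O) → LKind N O → Prop where
  | step : NodePat.mat I m n → NodePat.mat I m' n' → (o ∩ o').Nonempty →
      LSat I [(n, o, n')] (.step m o' m')
  | plusBase : LSat I [(n, o, n')] (.step m o' m') →
      LSat I [(n, o, n')] (.plus m o' m')
  | plusStep : LSat I [(n, o, n')] (.step m o' .star) →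
      LSat I π (.plus .star o' m') →
      LSat I ((n, o, n') :: π) (.plus m o' m')
  | stepC : LSat I [(n, o, n')] (.step m o' .star) → LSat I π P →
      LSat I ((n, o, n') :: π) (.stepC m o' m' P)
  | plusCBase : LSat I π (.stepC m o' m' P) → LSat I π (.plusC m o' m' P)
  | plusCStep : LSat I [(n, o, n')] (.step m o' .star) →
      LSat I π (.plusC .star o' .star P) →
      LSat I ((n, o, n') :: π) (.plusC m o' m' P)

/-- LTL formulas over atomic propositions `Pr` and actions `A`;
`acts o` stands for the disjunction `⋁_{op ∈ o} (op)`. -/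
inductive LTL (Pr A : Type) where
  | tt : LTL Pr A
  | atom : Pr → LTL Pr A
  | acts : Set A → LTL Pr A
  | and : LTL Pr A → LTL Pr A → LTL Pr A
  | or : LTL Pr A → LTL Pr A → LTL Pr A
  | not : LTL Pr A → LTL Pr A
  | next : LTL Pr A → LTL Pr A
  | untl : LTL Pr A → LTL Pr A → LTL Pr A

/-- A finite KTS path: a state followed by a list of (action, state) steps. -/
structure FinPath (S A : Type) where
  first : S
  rest : List (A × S)

/-- Drop the first `k` transitions of a finite path. -/
def FinPath.drop : FinPath S A → ℕ → FinPath S A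
  | w, 0 => w
  | ⟨s, []⟩, _ + 1 => ⟨s, []⟩
  | ⟨_, (_, s') :: r⟩, k + 1 => FinPath.drop ⟨s', r⟩ k

/-- Finite-path LTL semantics `w ⊨_l φ` with labeling `L`. -/
def FSat (L : S → Set Pr) : LTL Pr A → FinPath S A → Prop
  | .tt, _ => True
  | .atom p, w => p ∈ L w.first
  | .acts o, w => ∃ a s r, w.rest = (a, s) :: r ∧ a ∈ o
  | .and φ ψ, w => FSat L φ w ∧ FSat L ψ w
  | .or φ ψ, w => FSat L φ w ∨ FSat L ψ w
  | .not φ, w => ¬ FSat L φ w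
  | .next φ, w => ∃ a s r, w.rest = (a, s) :: r ∧ FSat L φ ⟨s, r⟩
  | .untl φ ψ, w => ∃ k, k ≤ w.rest.length ∧ FSat L ψ (w.drop k) ∧
      ∀ j < k, FSat L φ (w.drop j)

/-- The LTL encoding `enc(P)` of flow kinds (finite-path version,
with end marker `¬X(true)`). -/
def encK : LKind N O → LTL (NodePat N) O
  | .step n o n' =>
      .and (.atom n) (.and (.acts o) (.next (.and (.atom n') (.not (.next .tt)))))
  | .plus n o n' =>
      .and (.atom n) (.and (.acts o)
        (.next (.untl (.acts o) (.and (.atom n') (.not (.next .tt))))))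
  | .stepC n o _ P => .and (.atom n) (.and (.acts o) (.next (encK P)))
  | .plusC n o _ P =>
      .and (.atom n) (.and (.acts o) (.next (.untl (.acts o) (encK P))))

/-- The labeling `Λ` of the KTS of `I`: `M ∈ Λ(n)` iff `n ∈ ta(M)`
(with the wildcard true everywhere). -/
def labelOf (I : IFD N O) : N → Set (NodePat N) :=
  fun n => {p | NodePat.mat I p n}

/-- `encRest π r`: the steps `r` traverse the arcs `π` choosing one
operation from each arc's operation set. -/
def encRest : List (Arc N O) → List (O × N) → Prop
  | [], [] => True
  | (_, o, n') :: π, (op, s) :: r => op ∈ o ∧ s = n' ∧ encRest π r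
  | _, _ => False

/-- `w ∈ enc(π)` : the KTS path `w` results from the diagram path `π`
by choosing one operation from each arc's operation set. -/
def encPath (π : List (Arc N O)) (w : FinPath N O) : Prop :=
  match π with
  | [] => False
  | (n, _, _) :: _ => w.first = n ∧ encRest π w.rest

/-- Auxiliary for `π_w`. -/
def diagOf : N → List (O × N) → List (Arc N O)
  | _, [] => []
  | s, (op, s') :: r => (s, ({op} : Set O), s') :: diagOf s' r

/-- `π_w`: the diagram path obtained from a KTS path by replacing each
action `op` with the singleton `{op}`. -/
def FinPath.toDiagram (w : FinPath N O) : List (Arc N O) := diagOf w.first w.rest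

/-- A transition of the KTS of `I`: `E' = {(n, op, n') | (n,o,n') ∈ E, op ∈ o}`. -/
def ktsStep (I : IFD N O) (s : N) (op : O) (s' : N) : Prop :=
  ∃ o, (s, o, s') ∈ I.E ∧ op ∈ o

def ktsRest (I : IFD N O) : N → List (O × N) → Prop
  | _, [] => True
  | s, (op, s') :: r => ktsStep I s op s' ∧ ktsRest I s' r

/-- `w` is a (finite) path of the KTS of `I`. -/
def KTSPath (I : IFD N O) (w : FinPath N O) : Prop := ktsRest I w.first w.rest

/-- `K ⊨_l φ`: every finite path of the KTS of `I` satisfies `φ`. -/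
def KModels (I : IFD N O) (φ : LTL (NodePat N) O) : Prop :=
  ∀ w, KTSPath I w → FSat (labelOf I) φ w

/-- IFL requirements over right-linear kinds. -/
inductive LReq (N O : Type) where
  | ex : LKind N O → LReq N O
  | no : LKind N O → LReq N O
  | constr : LKind N O → LKind N O → LReq N O

/-- Validity `I ⊨ R` for right-linear requirements. -/
def LValid (I : IFD N O) : LReq N O → Prop
  | .ex P => ∃ π, PathIn I π ∧ LSat I π P
  | .no P => ¬ ∃ π, PathIn I π ∧ LSat I π P
  | .constr P P' => ∀ π, PathIn I π → LSat I π P → LSat I π P'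

/-- Satisfaction `K ⊢ R` in the finite-path KTS semantics. -/
def KEnt (I : IFD N O) : LReq N O → Prop
  | .ex P => ¬ KModels I (.not (encK P))
  | .no P => KModels I (.not (encK P))
  | .constr P P' => KModels I (.or (.not (encK P)) (encK P'))

/-- Infinite KTS paths. -/
structure InfPath (S A : Type) where
  state : ℕ → S
  act : ℕ → A

def InfPath.drop (w : InfPath S A) (k : ℕ) : InfPath S A :=
  ⟨fun i => w.state (i + k), fun i => w.act (i + k)⟩

/-- Infinite-path LTL semantics. -/
def ISat (L : S → Set Pr) : LTL Pr A → InfPath S A → Prop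
  | .tt, _ => True
  | .atom p, w => p ∈ L (w.state 0)
  | .acts o, w => w.act 0 ∈ o
  | .and φ ψ, w => ISat L φ w ∧ ISat L ψ w
  | .or φ ψ, w => ISat L φ w ∨ ISat L ψ w
  | .not φ, w => ¬ ISat L φ w
  | .next φ, w => ISat L φ (w.drop 1)
  | .untl φ ψ, w => ∃ k, ISat L ψ (w.drop k) ∧ ∀ j < k, ISat L φ (w.drop j)

/-- Atomic propositions for the sink-extended KTS: node patterns plus
the distinguished proposition `ι`. -/
abbrev SProp (N : Type) := NodePat N ⊕ Unit

/-- Labeling of the sink-extended KTS: the sink (`none`) is labeled only by `ι`. -/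
def labelι (I : IFD N O) : Option N → Set (SProp N)
  | some n => {p | ∃ q, p = Sum.inl q ∧ NodePat.mat I q n}
  | none => {Sum.inr ()}

/-- The encoding `enc_ι(P)` of flow kinds for the sink-extended KTS:
identical to `enc` except that `¬X(true)` is replaced by `X(ι)`. -/
def encι : LKind N O → LTL (SProp N) O
  | .step n o n' =>
      .and (.atom (.inl n)) (.and (.acts o)
        (.next (.and (.atom (.inl n')) (.next (.atom (.inr ()))))))
  | .plus n o n' =>
      .and (.atom (.inl n)) (.and (.acts o)
        (.next (.untl (.acts o) (.and (.atom (.inl n')) (.next (.atom (.inr ())))))))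
  | .stepC n o _ P => .and (.atom (.inl n)) (.and (.acts o) (.next (encι P)))
  | .plusC n o _ P =>
      .and (.atom (.inl n)) (.and (.acts o) (.next (.untl (.acts o) (encι P))))

/-- The states of a finite path. -/
def FinPath.states (w : FinPath S A) : List S := w.first :: w.rest.map Prod.snd

/-- `w·ι^ω`: the finite path `w` followed by the sink forever
(with arbitrary operation labels `ops` into `ι`). -/
def appendSink (w : FinPath N O) (ops : ℕ → O) : InfPath (Option N) O where
  state := fun i => w.states[i]?
  act := fun i => if h : i < w.rest.length then (w.rest.get ⟨i, h⟩).1 else ops i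

/-- Transitions of the sink-extended KTS `K_ι`: the transitions of `K`,
transitions from every state to the sink with every operation, and the
self-loop on the sink. -/
def sinkStep (I : IFD N O) : Option N → O → Option N → Prop
  | some s, op, some s' => ktsStep I s op s'
  | _, _, none => True
  | none, _, some _ => False

/-- `w` is an infinite path of the sink-extended KTS `K_ι`. -/
def KιPath (I : IFD N O) (w : InfPath (Option N) O) : Prop :=
  ∀ i, sinkStep I (w.state i) (w.act i) (w.state (i + 1))

/-- `K_ι ⊨_l φ`: every infinite path of `K_ι` satisfies `φ`. -/
def KιModels (I : IFD N O) (φ : LTL (SProp N) O) : Prop :=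
  ∀ w, KιPath I w → ISat (labelι I) φ w

/-- Satisfaction `K_ι ⊢ R` in the infinite-path, sink-extended semantics. -/
def KιEnt (I : IFD N O) : LReq N O → Prop
  | .ex P => ¬ KιModels I (.not (encι P))
  | .no P => KιModels I (.not (encι P))
  | .constr P P' => KιModels I (.or (.not (encι P)) (encι P'))

/-- The leading node constraint of a kind. -/
def LKind.firstNode : LKind N O → NodePat N
  | .step n _ _ => n
  | .plus n _ _ => n
  | .stepC n _ _ _ => n
  | .plusC n _ _ _ => n

/-- The leading operation set of a kind. -/
def LKind.firstOps : LKind N O → Set O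
  | .step _ o _ => o
  | .plus _ o _ => o
  | .stepC _ o _ _ => o
  | .plusC _ o _ _ => o

end IFCIL

section Aux

variable {N O : Type}

lemma lsat_ne_nil {I : IFD N O} {π : List (Arc N O)} {P : LKind N O}
    (h : LSat I π P) : π ≠ [] := by
  induction h <;> simp_all

lemma chained_tail {a : Arc N O} {π : List (Arc N O)} (h : Chained (a :: π)) :
    Chained π := by
  cases π with
  | nil => trivial
  | cons b t => exact h.2

lemma chained_head {a b : Arc N O} {t : List (Arc N O)}
    (h : Chained (a :: b :: t)) : a.2.2 = b.1 := h.1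

lemma chained_cons {a b : Arc N O} {t : List (Arc N O)}
    (hab : a.2.2 = b.1) (h : Chained (b :: t)) : Chained (a :: b :: t) :=
  ⟨hab, h⟩

lemma drop_cons_succ {S A : Type} (s : S) (a : A) (s' : S) (r : List (A × S)) (k : ℕ) :
    FinPath.drop ⟨s, (a, s') :: r⟩ (k + 1) = FinPath.drop ⟨s', r⟩ k := rfl

lemma drop_zero {S A : Type} (w : FinPath S A) : FinPath.drop w 0 = w := by
  cases w with
  | mk f r => cases r <;> rfl

/-- From a diagram path satisfying `P`, extract a KTS path satisfying `enc(P)`. -/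
lemma lemA {I : IFD N O} {π : List (Arc N O)} {P : LKind N O} (h : LSat I π P) :
    Chained π → (∀ a ∈ π, a ∈ I.E) →
    ∃ rest, ktsRest I (π.head (lsat_ne_nil h)).1 rest ∧
      FSat (labelOf I) (encK P) ⟨(π.head (lsat_ne_nil h)).1, rest⟩ := by
  induction h with
  | @step m n m' n' o o' h1 h2 h3 =>
    intro _ hmem
    obtain ⟨op, hop⟩ := h3
    refine ⟨[(op, n')], ⟨⟨o, hmem _ (by simp), hop.1⟩, trivial⟩, ?_⟩
    simp only [encK, FSat, labelOf, Set.mem_setOf_eq, List.head_cons]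
    exact ⟨h1, ⟨op, n', [], rfl, hop.2⟩, op, n', [], rfl, h2, by simp [FSat]⟩
  | @plusBase n o n' m o' m' h ih =>
    intro hch hmem
    obtain ⟨rest, hk, hf⟩ := ih hch hmem
    refine ⟨rest, hk, ?_⟩
    simp only [encK, FSat, List.head_cons] at hf ⊢
    obtain ⟨h1, h2, a, s, r, hr, h3⟩ := hf
    exact ⟨h1, h2, a, s, r, hr, 0, Nat.zero_le _, by rw [drop_zero]; exact h3,
      fun j hj => absurd hj (Nat.not_lt_zero j)⟩
  | @plusStep n o n' m o' π m' h1 h2 ih1 ih2 =>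
    intro hch hmem
    have hne := lsat_ne_nil h2
    obtain ⟨b, t, rfl⟩ : ∃ b t, π = b :: t := by
      cases π with
      | nil => exact absurd rfl hne
      | cons b t => exact ⟨b, t, rfl⟩
    have hb1 : b.1 = n' := (chained_head hch).symm
    obtain ⟨rest, hk, hf⟩ := ih2 (chained_tail hch) (fun a ha => hmem a (by simp [ha]))
    simp only [List.head_cons] at hk hf ⊢
    cases h1 with
    | step hm _ h3 =>
      obtain ⟨op, hop⟩ := h3
      refine ⟨(op, n') :: rest, ⟨⟨o, hmem _ (by simp), hop.1⟩, hb1 ▸ hk⟩, ?_⟩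
      simp only [encK, FSat, labelOf, Set.mem_setOf_eq] at hf ⊢
      obtain ⟨_, ⟨a2, s2, r2, hr2, ha2⟩, a3, s3, r3, hr3, k, hkle, hψ, hφ⟩ := hf
      rw [hr2] at hr3
      injection hr3 with e1 e2
      injection e1 with e1a e1b
      subst e1a; subst e1b; subst e2
      subst hr2
      refine ⟨hm, ⟨op, n', (a2, s2) :: r2, rfl, hop.2⟩, op, n', (a2, s2) :: r2, rfl,
        k + 1, by simp at hkle ⊢; omega, ?_, ?_⟩
      · rw [drop_cons_succ]; exact hψ
      · intro j hj
        match j with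
        | 0 =>
          rw [drop_zero]
          exact ⟨a2, s2, r2, rfl, ha2⟩
        | j + 1 =>
          rw [drop_cons_succ]
          exact hφ j (by omega)
  | @stepC n o n' m o' π P m' h1 h2 ih1 ih2 =>
    intro hch hmem
    have hne := lsat_ne_nil h2
    obtain ⟨b, t, rfl⟩ : ∃ b t, π = b :: t := by
      cases π with
      | nil => exact absurd rfl hne
      | cons b t => exact ⟨b, t, rfl⟩
    have hb1 : b.1 = n' := (chained_head hch).symm
    obtain ⟨rest, hk, hf⟩ := ih2 (chained_tail hch) (fun a ha => hmem a (by simp [ha]))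
    simp only [List.head_cons] at hk hf ⊢
    cases h1 with
    | step hm _ h3 =>
      obtain ⟨op, hop⟩ := h3
      refine ⟨(op, n') :: rest, ⟨⟨o, hmem _ (by simp), hop.1⟩, hb1 ▸ hk⟩, ?_⟩
      simp only [encK, FSat, labelOf, Set.mem_setOf_eq]
      exact ⟨hm, ⟨op, n', rest, rfl, hop.2⟩, op, n', rest, rfl, hb1 ▸ hf⟩
  | @plusCBase π m o' m' P h ih =>
    intro hch hmem
    obtain ⟨rest, hk, hf⟩ := ih hch hmem
    refine ⟨rest, hk, ?_⟩
    simp only [encK, FSat] at hf ⊢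
    obtain ⟨h1, h2, a, s, r, hr, h3⟩ := hf
    exact ⟨h1, h2, a, s, r, hr, 0, Nat.zero_le _, by rw [drop_zero]; exact h3,
      fun j hj => absurd hj (Nat.not_lt_zero j)⟩
  | @plusCStep n o n' m o' π P m' h1 h2 ih1 ih2 =>
    intro hch hmem
    have hne := lsat_ne_nil h2
    obtain ⟨b, t, rfl⟩ : ∃ b t, π = b :: t := by
      cases π with
      | nil => exact absurd rfl hne
      | cons b t => exact ⟨b, t, rfl⟩
    have hb1 : b.1 = n' := (chained_head hch).symm
    obtain ⟨rest, hk, hf⟩ := ih2 (chained_tail hch) (fun a ha => hmem a (by simp [ha]))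
    simp only [List.head_cons] at hk hf ⊢
    cases h1 with
    | step hm _ h3 =>
      obtain ⟨op, hop⟩ := h3
      refine ⟨(op, n') :: rest, ⟨⟨o, hmem _ (by simp), hop.1⟩, hb1 ▸ hk⟩, ?_⟩
      simp only [encK, FSat, labelOf, Set.mem_setOf_eq] at hf ⊢
      obtain ⟨_, ⟨a2, s2, r2, hr2, ha2⟩, a3, s3, r3, hr3, k, hkle, hψ, hφ⟩ := hf
      rw [hr2] at hr3
      injection hr3 with e1 e2
      injection e1 with e1a e1b
      subst e1a; subst e1b; subst e2
      subst hr2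
      refine ⟨hm, ⟨op, n', (a2, s2) :: r2, rfl, hop.2⟩, op, n', (a2, s2) :: r2, rfl,
        k + 1, by simp at hkle ⊢; omega, ?_, ?_⟩
      · rw [drop_cons_succ]; exact hψ
      · intro j hj
        match j with
        | 0 =>
          rw [drop_zero]
          exact ⟨a2, s2, r2, rfl, ha2⟩
        | j + 1 =>
          rw [drop_cons_succ]
          exact hφ j (by omega)

/-- From a KTS path satisfying `enc(P)`, extract a diagram path satisfying `P`. -/
lemma lemB {I : IFD N O} : ∀ (k : ℕ) (P : LKind N O) (n : N) (rest : List (O × N)),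
    rest.length ≤ k → ktsRest I n rest → FSat (labelOf I) (encK P) ⟨n, rest⟩ →
    ∃ x tl, x.1 = n ∧ PathIn I (x :: tl) ∧ LSat I (x :: tl) P := by
  intro k
  induction k with
  | zero =>
    intro P n rest hlen hkts hsat
    have hrest : rest = [] := List.length_eq_zero_iff.mp (Nat.le_zero.mp hlen)
    subst hrest
    exfalso
    cases P <;> simp only [encK, FSat] at hsat <;>
      obtain ⟨_, ⟨a, s, r, hr, _⟩, _⟩ := hsat <;> exact List.cons_ne_nil _ _ hr.symm
  | succ k ih =>
    intro P n rest hlen hkts hsat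
    cases P with
    | step m o' m' =>
      simp only [encK, FSat] at hsat
      obtain ⟨hm, ⟨a, s, r, hr, ha⟩, a2, s2, r2, hr2, hm', hend⟩ := hsat
      rw [hr] at hr2
      injection hr2 with e1 e2
      injection e1 with e1a e1b
      subst e1a; subst e1b; subst e2
      have hrnil : r = [] := by
        cases r with
        | nil => rfl
        | cons p t => exact absurd ⟨p.1, p.2, t, by simp, trivial⟩ hend
      subst hrnil; subst hr
      obtain ⟨⟨o, hE, hao⟩, -⟩ := hkts
      refine ⟨(n, o, s), [], rfl, ⟨by simp, trivial, ?_⟩, ?_⟩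
      · intro x hx; simp at hx; subst hx; exact hE
      · exact LSat.step hm hm' ⟨a, hao, ha⟩
    | plus m o' m' =>
      simp only [encK, FSat] at hsat
      obtain ⟨hm, ⟨a, s, r, hr, ha⟩, a2, s2, r2, hr2, k', hk'le, hψ, hφ⟩ := hsat
      rw [hr] at hr2
      injection hr2 with e1 e2
      injection e1 with e1a e1b
      subst e1a; subst e1b; subst e2
      subst hr
      obtain ⟨⟨o, hE, hao⟩, hkts'⟩ := hkts
      cases k' with
      | zero =>
        simp only [FinPath.drop, FSat] at hψ
        obtain ⟨hm', hend⟩ := hψ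
        have hrnil : r = [] := by
          cases r with
          | nil => rfl
          | cons p t => exact absurd ⟨p.1, p.2, t, by simp, trivial⟩ hend
        subst hrnil
        refine ⟨(n, o, s), [], rfl, ⟨by simp, trivial, ?_⟩, ?_⟩
        · intro x hx; simp at hx; subst hx; exact hE
        · exact LSat.plusBase (LSat.step hm hm' ⟨a, hao, ha⟩)
      | succ k'' =>
        obtain ⟨⟨a3, s3⟩, r3, rfl⟩ : ∃ p t, r = p :: t := by
          cases r with
          | nil => simp at hk'le
          | cons p t => exact ⟨p, t, rfl⟩
        have ha3 : a3 ∈ o' := by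
          have := hφ 0 (Nat.succ_pos _)
          simp only [FinPath.drop, FSat] at this
          obtain ⟨a4, s4, r4, he, ha4⟩ := this
          injection he with e1 e2
          injection e1 with e1a e1b
          subst e1a; exact ha4
        have hsat' : FSat (labelOf I) (encK (.plus .star o' m')) ⟨s, (a3, s3) :: r3⟩ := by
          simp only [encK, FSat, labelOf, Set.mem_setOf_eq]
          refine ⟨trivial, ⟨a3, s3, r3, rfl, ha3⟩, a3, s3, r3, rfl, k'', ?_, ?_, ?_⟩
          · simp at hk'le ⊢; omega
          · rw [← drop_cons_succ s a3 s3 r3 k'']; exact hψ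
          · intro j hj
            rw [← drop_cons_succ s a3 s3 r3 j]
            exact hφ (j + 1) (by omega)
        have hlen' : ((a3, s3) :: r3).length ≤ k := by simp at hlen ⊢; omega
        obtain ⟨x, tl, hx1, ⟨_, hch, hmem⟩, hls⟩ := ih _ s _ hlen' hkts' hsat'
        refine ⟨(n, o, s), x :: tl, rfl, ⟨by simp, chained_cons (by simpa using hx1.symm) hch, ?_⟩, ?_⟩
        · intro y hy
          rcases List.mem_cons.mp hy with h | h
          · subst h; exact hE
          · exact hmem y h
        · exact LSat.plusStep (LSat.step hm trivial ⟨a, hao, ha⟩) hls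
    | stepC m o' m' P' =>
      simp only [encK, FSat] at hsat
      obtain ⟨hm, ⟨a, s, r, hr, ha⟩, a2, s2, r2, hr2, hP'⟩ := hsat
      rw [hr] at hr2
      injection hr2 with e1 e2
      injection e1 with e1a e1b
      subst e1a; subst e1b; subst e2
      subst hr
      obtain ⟨⟨o, hE, hao⟩, hkts'⟩ := hkts
      have hlen' : r.length ≤ k := by simp at hlen; omega
      obtain ⟨x, tl, hx1, ⟨_, hch, hmem⟩, hls⟩ := ih P' s r hlen' hkts' hP'
      refine ⟨(n, o, s), x :: tl, rfl, ⟨by simp, chained_cons (by simpa using hx1.symm) hch, ?_⟩, ?_⟩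
      · intro y hy
        rcases List.mem_cons.mp hy with h | h
        · subst h; exact hE
        · exact hmem y h
      · exact LSat.stepC (LSat.step hm trivial ⟨a, hao, ha⟩) hls
    | plusC m o' m' P' =>
      simp only [encK, FSat] at hsat
      obtain ⟨hm, ⟨a, s, r, hr, ha⟩, a2, s2, r2, hr2, k', hk'le, hψ, hφ⟩ := hsat
      rw [hr] at hr2
      injection hr2 with e1 e2
      injection e1 with e1a e1b
      subst e1a; subst e1b; subst e2
      subst hr
      obtain ⟨⟨o, hE, hao⟩, hkts'⟩ := hkts
      cases k' with
      | zero =>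
        simp only [FinPath.drop] at hψ
        have hlen' : r.length ≤ k := by simp at hlen; omega
        obtain ⟨x, tl, hx1, ⟨_, hch, hmem⟩, hls⟩ := ih P' s r hlen' hkts' hψ
        refine ⟨(n, o, s), x :: tl, rfl, ⟨by simp, chained_cons (by simpa using hx1.symm) hch, ?_⟩, ?_⟩
        · intro y hy
          rcases List.mem_cons.mp hy with h | h
          · subst h; exact hE
          · exact hmem y h
        · exact LSat.plusCBase (LSat.stepC (LSat.step hm trivial ⟨a, hao, ha⟩) hls)
      | succ k'' =>
        obtain ⟨⟨a3, s3⟩, r3, rfl⟩ : ∃ p t, r = p :: t := by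
          cases r with
          | nil => simp at hk'le
          | cons p t => exact ⟨p, t, rfl⟩
        have ha3 : a3 ∈ o' := by
          have := hφ 0 (Nat.succ_pos _)
          simp only [FinPath.drop, FSat] at this
          obtain ⟨a4, s4, r4, he, ha4⟩ := this
          injection he with e1 e2
          injection e1 with e1a e1b
          subst e1a; exact ha4
        have hsat' : FSat (labelOf I) (encK (.plusC .star o' .star P')) ⟨s, (a3, s3) :: r3⟩ := by
          simp only [encK, FSat, labelOf, Set.mem_setOf_eq]
          refine ⟨trivial, ⟨a3, s3, r3, rfl, ha3⟩, a3, s3, r3, rfl, k'', ?_, ?_, ?_⟩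
          · simp at hk'le ⊢; omega
          · rw [← drop_cons_succ s a3 s3 r3 k'']; exact hψ
          · intro j hj
            rw [← drop_cons_succ s a3 s3 r3 j]
            exact hφ (j + 1) (by omega)
        have hlen' : ((a3, s3) :: r3).length ≤ k := by simp at hlen ⊢; omega
        obtain ⟨x, tl, hx1, ⟨_, hch, hmem⟩, hls⟩ := ih _ s _ hlen' hkts' hsat'
        refine ⟨(n, o, s), x :: tl, rfl, ⟨by simp, chained_cons (by simpa using hx1.symm) hch, ?_⟩, ?_⟩
        · intro y hy
          rcases List.mem_cons.mp hy with h | h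
          · subst h; exact hE
          · exact hmem y h
        · exact LSat.plusCStep (LSat.step hm trivial ⟨a, hao, ha⟩) hls

end Aux

/-- For any information flow diagram `I` with KTS `K` and path
existence requirement `P`: `K ⊢ P` iff `I ⊨ P`; i.e., `K` does not satisfy
`¬enc(P)` on all finite paths iff some path of `I` has kind `P`. -/
theorem correctness_existence {N O : Type} (I : IFD N O) (P : LKind N O) :
    (¬ KModels I (.not (encK P))) ↔ (∃ π, PathIn I π ∧ LSat I π P) := by
  constructor
  · intro h
    simp only [KModels, not_forall] at h
    obtain ⟨w, hpath, hsat⟩ := h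
    have hsat' : FSat (labelOf I) (encK P) w := by
      by_contra hc
      exact hsat hc
    obtain ⟨x, tl, hx1, hp, hs⟩ := lemB w.rest.length P w.first w.rest le_rfl hpath hsat'
    exact ⟨x :: tl, hp, hs⟩
  · rintro ⟨π, ⟨hne, hch, hmem⟩, hs⟩
    obtain ⟨rest, hk, hf⟩ := lemA hs hch hmem
    intro hK
    exact hK ⟨(π.head (lsat_ne_nil hs)).1, rest⟩ hk hf
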